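/- For n ≥ 0, the inclusion □^n ⊆ N(RCpt^n) is inner anodyne, where RCpt^n is the poset {(i,j) : 0 ≤ i ≤ j ≤ n} with the order induced from [n] × [n], and □^n = ⋃_{k=0}^n N({(i,j) : 0 ≤ i ≤ k ≤ j ≤ n}) is the union of the nerves of the indicated full subposets inside N(RCpt^n). -/

import Mathlib

open CategoryTheory Simplicial

/-- The union of the nerves of a family of full subposets, as a subcomplex of the
nerve of a poset `S`. -/
def nerveUnion (S : Type*) [PartialOrder S] (Qs : Set (Set S)) :
    Subfunctor (nerve S) where
  obj _ := {σ | ∃ T ∈ Qs, ∀ i, σ.obj i ∈ T}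
  map f := by
    rintro σ ⟨T, hT, h⟩
    exact ⟨T, hT, fun i => h _⟩

/-- The class of inner horn inclusions `Λ[n, i] ⟶ Δ[n]`, `0 < i < n`, up to
isomorphism in the arrow category. -/
def InnerHornInclusions : MorphismProperty SSet := fun _ _ f =>
  ∃ (n : ℕ) (i : Fin (n + 1)), 0 < (i : ℕ) ∧ (i : ℕ) < n ∧
    Nonempty (Arrow.mk f ≅ Arrow.mk ((SSet.horn n i).ι))

/-- The right lifting property against a class of morphisms. -/
def RLP (T : MorphismProperty SSet) : MorphismProperty SSet := fun _ _ p =>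
  ∀ ⦃A B : SSet⦄ (i : A ⟶ B), T i → HasLiftingProperty i p

/-- The left lifting property against a class of morphisms. -/
def LLP (T : MorphismProperty SSet) : MorphismProperty SSet := fun _ _ i =>
  ∀ ⦃X Y : SSet⦄ (p : X ⟶ Y), T p → HasLiftingProperty i p

/-- Inner anodyne maps. -/
def InnerAnodyne : MorphismProperty SSet := LLP (RLP InnerHornInclusions)

/-- `RCpt^n` is the poset `{(i,j) : 0 ≤ i ≤ j ≤ n}` with the order induced from
`[n] × [n]`. -/
def RCpt (n : ℕ) : Type := {ij : Fin (n + 1) × Fin (n + 1) // ij.1 ≤ ij.2}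

instance (n : ℕ) : PartialOrder (RCpt n) :=
  inferInstanceAs (PartialOrder {ij : Fin (n + 1) × Fin (n + 1) // ij.1 ≤ ij.2})


namespace Stmt16Aux

variable {n : ℕ}

instance : DecidableEq (RCpt n) :=
  inferInstanceAs (DecidableEq {ij : Fin (n+1) × Fin (n+1) // ij.1 ≤ ij.2})
instance : Fintype (RCpt n) :=
  inferInstanceAs (Fintype {ij : Fin (n+1) × Fin (n+1) // ij.1 ≤ ij.2})

lemma le_iff (a b : RCpt n) : a ≤ b ↔ a.val.1 ≤ b.val.1 ∧ a.val.2 ≤ b.val.2 := Iff.rfl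

lemma rc_le (a : RCpt n) : a.val.1 ≤ a.val.2 := a.2

abbrev Chain (c : Finset (RCpt n)) : Prop := IsChain (· ≤ ·) (c : Set (RCpt n))

/-- min of second coordinates -/
noncomputable def jj (c : Finset (RCpt n)) : Fin (n+1) := c.inf (fun v => v.val.2)
/-- elements whose first coordinate exceeds `jj c` -/
noncomputable def big (c : Finset (RCpt n)) : Finset (RCpt n) := c.filter (fun v => jj c < v.val.1)
noncomputable def rr (c : Finset (RCpt n)) : Fin (n+1) := (big c).inf (fun v => v.val.2)
def Bad (c : Finset (RCpt n)) : Prop := (big c).Nonempty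

lemma jj_le {c : Finset (RCpt n)} {v} (hv : v ∈ c) : jj c ≤ v.val.2 := Finset.inf_le hv
lemma exists_jj {c : Finset (RCpt n)} (hne : c.Nonempty) : ∃ v ∈ c, v.val.2 = jj c := by
  obtain ⟨v, hv, h⟩ := Finset.exists_mem_eq_inf c hne (fun v => v.val.2)
  exact ⟨v, hv, h.symm⟩
lemma rr_le {c : Finset (RCpt n)} {v} (hv : v ∈ big c) : rr c ≤ v.val.2 := Finset.inf_le hv
lemma exists_rr {c : Finset (RCpt n)} (hbad : Bad c) : ∃ v ∈ big c, v.val.2 = rr c := by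
  obtain ⟨v, hv, h⟩ := Finset.exists_mem_eq_inf _ hbad (fun v => v.val.2)
  exact ⟨v, hv, h.symm⟩
lemma big_subset {c : Finset (RCpt n)} : big c ⊆ c := Finset.filter_subset _ _
lemma mem_big_iff {c : Finset (RCpt n)} {v} : v ∈ big c ↔ v ∈ c ∧ jj c < v.val.1 :=
  Finset.mem_filter

lemma jj_le_rr (c : Finset (RCpt n)) : jj c ≤ rr c :=
  Finset.le_inf (fun v hv => le_trans (le_of_lt (mem_big_iff.1 hv).2) (rc_le v))

lemma jj_lt_rr {c : Finset (RCpt n)} (hbad : Bad c) : jj c < rr c := by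
  obtain ⟨v, hv, h⟩ := exists_rr hbad
  exact lt_of_lt_of_le (mem_big_iff.1 hv).2 (h ▸ rc_le v)

/-- the inserted vertex -/
noncomputable def wv (c : Finset (RCpt n)) : RCpt n := ⟨(jj c, rr c), jj_le_rr c⟩

lemma wv_not_mem_big (c : Finset (RCpt n)) : wv c ∉ big c := by
  intro h
  exact absurd (mem_big_iff.1 h).2 (lt_irrefl _)

lemma not_bad_iff {c : Finset (RCpt n)} : ¬ Bad c ↔ ∀ v ∈ c, v.val.1 ≤ jj c := by
  rw [Bad, big, Finset.not_nonempty_iff_eq_empty, Finset.filter_eq_empty_iff]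
  exact ⟨fun h v hv => not_lt.1 (h hv), fun h v hv => not_lt.2 (h v hv)⟩

/-- a small element is below any big element -/
lemma small_lt_big {c : Finset (RCpt n)} (hc : Chain c) {u v}
    (hu : u ∈ c) (hu1 : u.val.1 ≤ jj c) (hv : v ∈ big c) : u < v := by
  have hne : u ≠ v := by
    intro h; subst h; exact absurd hu1 (not_le.2 (mem_big_iff.1 hv).2)
  rcases hc hu (big_subset hv) hne with h | h
  · exact lt_of_le_of_ne h hne
  · exact absurd ((le_iff _ _).1 h).1 (not_le.2 (lt_of_le_of_lt hu1 (mem_big_iff.1 hv).2))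

lemma small_le_wv {c : Finset (RCpt n)} (hc : Chain c) {u}
    (hu : u ∈ c) (hu1 : u.val.1 ≤ jj c) : u ≤ wv c := by
  refine (le_iff _ _).2 ⟨hu1, Finset.le_inf (fun v hv => ?_)⟩
  exact ((le_iff _ _).1 (le_of_lt (small_lt_big hc hu hu1 hv))).2

lemma wv_lt_big {c : Finset (RCpt n)} {v} (hv : v ∈ big c) : wv c < v := by
  refine lt_of_le_of_ne ((le_iff _ _).2 ⟨le_of_lt (mem_big_iff.1 hv).2, rr_le hv⟩) ?_
  intro h
  exact wv_not_mem_big c (h ▸ hv)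

lemma chain_insert_wv {c : Finset (RCpt n)} (hc : Chain c) :
    Chain (insert (wv c) c) := by
  intro a ha b hb hab
  simp only [Finset.coe_insert, Set.mem_insert_iff, Finset.mem_coe] at ha hb
  rcases ha with rfl | ha
  · rcases hb with rfl | hb
    · exact absurd rfl hab
    · rcases le_or_gt b.val.1 (jj c) with h | h
      · exact Or.inr (small_le_wv hc hb h)
      · exact Or.inl (le_of_lt (wv_lt_big (mem_big_iff.2 ⟨hb, h⟩)))
  · rcases hb with rfl | hb
    · rcases le_or_gt a.val.1 (jj c) with h | h
      · exact Or.inl (small_le_wv hc ha h)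
      · exact Or.inr (le_of_lt (wv_lt_big (mem_big_iff.2 ⟨ha, h⟩)))
    · exact hc ha hb hab

section InsertLemmas
variable {c : Finset (RCpt n)} (hbad : Bad c)

include hbad

lemma jj_insert : jj (insert (wv c) c) = jj c := by
  rw [jj, Finset.inf_insert]
  show rr c ⊓ jj c = jj c
  exact inf_eq_right.2 (le_of_lt (jj_lt_rr hbad))

lemma big_insert : big (insert (wv c) c) = big c := by
  have hneg : ¬ jj c < (wv c).val.1 := lt_irrefl _
  rw [big]
  simp only [jj_insert hbad]
  rw [Finset.filter_insert, if_neg hneg, big]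

lemma bad_insert : Bad (insert (wv c) c) := by rw [Bad, big_insert hbad]; exact hbad

lemma rr_insert : rr (insert (wv c) c) = rr c := by rw [rr, big_insert hbad, rr]

lemma wv_insert : wv (insert (wv c) c) = wv c := by
  apply Subtype.ext
  show (jj (insert (wv c) c), rr (insert (wv c) c)) = (jj c, rr c)
  rw [jj_insert hbad, rr_insert hbad]

end InsertLemmas

section EraseLemmas
variable {c : Finset (RCpt n)} (hbad : Bad c) (hw : wv c ∈ c)

include hbad hw

lemma jj_erase : jj (c.erase (wv c)) = jj c := by
  obtain ⟨v, hv, hv2⟩ := exists_jj ⟨_, hw⟩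
  have hvw : v ≠ wv c := by
    intro h
    rw [h] at hv2
    exact absurd hv2 (ne_of_gt (jj_lt_rr hbad))
  refine le_antisymm ?_ (Finset.inf_mono (Finset.erase_subset _ _))
  calc jj (c.erase (wv c)) ≤ v.val.2 := jj_le (Finset.mem_erase.2 ⟨hvw, hv⟩)
  _ = jj c := hv2

lemma big_erase : big (c.erase (wv c)) = big c := by
  rw [big]
  simp only [jj_erase hbad hw]
  rw [Finset.filter_erase, big]
  exact Finset.erase_eq_of_notMem (by rw [← big]; exact wv_not_mem_big c)

lemma bad_erase : Bad (c.erase (wv c)) := by rw [Bad, big_erase hbad hw]; exact hbad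

lemma rr_erase : rr (c.erase (wv c)) = rr c := by rw [rr, big_erase hbad hw, rr]

lemma wv_erase : wv (c.erase (wv c)) = wv c := by
  apply Subtype.ext
  show (jj (c.erase (wv c)), rr (c.erase (wv c))) = (jj c, rr c)
  rw [jj_erase hbad hw, rr_erase hbad hw]

end EraseLemmas

/-- the type-II chain associated to a bad chain -/
noncomputable def own (c : Finset (RCpt n)) : Finset (RCpt n) :=
  if wv c ∈ c then c else insert (wv c) c

lemma subset_own (c : Finset (RCpt n)) : c ⊆ own c := by
  unfold own; split
  · exact subset_rfl
  · exact Finset.subset_insert _ _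

lemma own_chain {c : Finset (RCpt n)} (hc : Chain c) : Chain (own c) := by
  unfold own; split
  · exact hc
  · exact chain_insert_wv hc

lemma own_bad {c : Finset (RCpt n)} (hbad : Bad c) : Bad (own c) := by
  unfold own; split
  · exact hbad
  · exact bad_insert hbad

lemma own_wv_mem {c : Finset (RCpt n)} (hbad : Bad c) : wv (own c) ∈ own c := by
  unfold own; split
  · assumption
  · rw [wv_insert hbad]; exact Finset.mem_insert_self _ _

lemma own_typeII {c : Finset (RCpt n)} (hw : wv c ∈ c) : own c = c := if_pos hw

lemma own_erase {c : Finset (RCpt n)} (hbad : Bad c) (hw : wv c ∈ c) :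
    own (c.erase (wv c)) = c := by
  rw [own, wv_erase hbad hw, if_neg (Finset.notMem_erase _ _), Finset.insert_erase hw]



noncomputable def sumsnd (c : Finset (RCpt n)) : ℕ := ∑ v ∈ c, (v.val.2.val)

noncomputable def stage (c : Finset (RCpt n)) : ℕ :=
  c.card * (Fintype.card (RCpt n) * n + 1) + (c.card * n - sumsnd c)

lemma sumsnd_le (c : Finset (RCpt n)) : sumsnd c ≤ c.card * n := by
  have := Finset.sum_le_card_nsmul c (fun v => (v.val.2.val : ℕ)) n (fun v _ => Fin.is_le _)
  simpa [sumsnd] using this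

lemma stage_lt_stage {c' c : Finset (RCpt n)}
    (h : c'.card < c.card ∨ (c'.card = c.card ∧ sumsnd c < sumsnd c')) :
    stage c' < stage c := by
  have hS' := sumsnd_le c'
  have hS := sumsnd_le c
  rcases h with h | ⟨h1, h2⟩
  · have e1 : c'.card * n ≤ Fintype.card (RCpt n) * n :=
      Nat.mul_le_mul_right _ c'.card_le_univ
    have e2 : (c'.card + 1) * (Fintype.card (RCpt n) * n + 1)
        ≤ c.card * (Fintype.card (RCpt n) * n + 1) := Nat.mul_le_mul_right _ (by omega)
    have e3 : (c'.card + 1) * (Fintype.card (RCpt n) * n + 1)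
        = c'.card * (Fintype.card (RCpt n) * n + 1) + (Fintype.card (RCpt n) * n + 1) := by
      ring
    unfold stage
    omega
  · rw [stage, stage, h1]
    rw [h1] at hS'
    omega

lemma exists_erase_of_card {d σ : Finset (RCpt n)} (hsub : d ⊆ σ) (h : d.card + 1 = σ.card) :
    ∃ q ∈ σ, q ∉ d ∧ d = σ.erase q := by
  have h1 : (σ \ d).card = 1 := by rw [Finset.card_sdiff_of_subset hsub]; omega
  obtain ⟨q, hq⟩ := Finset.card_eq_one.1 h1
  have hqm : q ∈ σ \ d := hq ▸ Finset.mem_singleton_self q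
  rw [Finset.mem_sdiff] at hqm
  refine ⟨q, hqm.1, hqm.2, ?_⟩
  ext v
  simp only [Finset.mem_erase]
  constructor
  · intro hv
    refine ⟨fun hvq => hqm.2 (hvq ▸ hv), hsub hv⟩
  · rintro ⟨hvq, hvσ⟩
    by_contra hvd
    have : v ∈ σ \ d := Finset.mem_sdiff.2 ⟨hvσ, hvd⟩
    rw [hq, Finset.mem_singleton] at this
    exact hvq this

lemma key {σ d : Finset (RCpt n)} (hσc : Chain σ) (hw : wv σ ∈ σ) (hσbad : Bad σ)
    (hsub : d ⊆ σ) (hdbad : Bad d) (h1 : d ≠ σ) (h2 : d ≠ σ.erase (wv σ)) :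
    (own d).card < σ.card ∨ ((own d).card = σ.card ∧ sumsnd σ < sumsnd (own d)) := by
  have hσne : σ.Nonempty := ⟨_, hw⟩
  have hcard : d.card < σ.card :=
    Finset.card_lt_card (Finset.ssubset_iff_subset_ne.2 ⟨hsub, h1⟩)
  by_cases hwd : wv d ∈ d
  · left; rw [own_typeII hwd]; exact hcard
  · have hown : own d = insert (wv d) d := if_neg hwd
    have hcardo : (own d).card = d.card + 1 := by
      rw [hown, Finset.card_insert_of_notMem hwd]
    by_cases hcard2 : d.card + 1 < σ.card
    · left; omega
    · have hc3 : d.card + 1 = σ.card := by omega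
      obtain ⟨q, hqσ, hqd, hdq⟩ := exists_erase_of_card hsub hc3
      have hqw : q ≠ wv σ := by
        intro h; exact h2 (by rw [hdq, h])
      refine Or.inr ⟨by omega, ?_⟩
      suffices hq2 : q.val.2 < rr d by
        have e1 : sumsnd (own d) = sumsnd d + ((wv d).val.2 : ℕ) := by
          rw [hown, sumsnd, Finset.sum_insert hwd, sumsnd]; ring
        have e2 : sumsnd d + (q.val.2 : ℕ) = sumsnd σ := by
          rw [hdq, sumsnd, sumsnd]
          exact Finset.sum_erase_add σ _ hqσ
        have e3 : ((wv d).val.2 : ℕ) = (rr d : ℕ) := rfl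
        have e4 : (q.val.2 : ℕ) < (rr d : ℕ) := hq2
        omega
      rcases le_or_gt q.val.1 (jj σ) with hqs | hqb
      · -- q is small
        have hjd : jj σ ≤ jj d := Finset.inf_mono hsub
        by_cases hj : jj d = jj σ
        · exfalso
          have hbd : big d = big σ := by
            rw [big, hj, hdq, Finset.filter_erase, ← big]
            exact Finset.erase_eq_of_notMem
              (fun hqb' => absurd (mem_big_iff.1 hqb').2 (not_lt.2 hqs))
          have hwvd : wv d = wv σ := by
            apply Subtype.ext
            show (jj d, rr d) = (jj σ, rr σ)
            rw [hj, rr, rr, hbd]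
          apply hwd
          rw [hwvd, hdq]
          exact Finset.mem_erase.2 ⟨Ne.symm hqw, hw⟩
        · have hjlt : jj σ < jj d := lt_of_le_of_ne hjd (Ne.symm hj)
          obtain ⟨v₀, hv₀, hv₀2⟩ := exists_jj hσne
          have hv₀q : v₀ = q := by
            by_contra hne
            have : v₀ ∈ d := hdq ▸ Finset.mem_erase.2 ⟨hne, hv₀⟩
            exact absurd (hv₀2 ▸ jj_le this) (not_le.2 hjlt)
          obtain ⟨v, hv, hv2⟩ := exists_rr hdbad
          have : q.val.2 = jj σ := by rw [← hv₀q, hv₀2]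
          rw [this, ← hv2]
          exact lt_of_lt_of_le hjlt (le_trans (le_of_lt (mem_big_iff.1 hv).2) (rc_le v))
      · -- q is big
        have hjd : jj d = jj σ := by
          obtain ⟨v₀, hv₀, hv₀2⟩ := exists_jj hσne
          have hne : v₀ ≠ q := by
            intro h
            exact absurd (h ▸ (le_trans (rc_le v₀) (le_of_eq hv₀2))) (not_le.2 hqb)
          have hv₀d : v₀ ∈ d := hdq ▸ Finset.mem_erase.2 ⟨hne, hv₀⟩
          exact le_antisymm (hv₀2 ▸ jj_le hv₀d) (Finset.inf_mono hsub)
        have hbd : big d = (big σ).erase q := by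
          rw [big, hjd, hdq, Finset.filter_erase, ← big]
        have hbsub : big d ⊆ big σ := by rw [hbd]; exact Finset.erase_subset _ _
        have hrrm : rr σ ≤ rr d := Finset.inf_mono hbsub
        have hrne : rr σ ≠ rr d := by
          intro h
          apply hwd
          have hwvd : wv d = wv σ := by
            apply Subtype.ext
            show (jj d, rr d) = (jj σ, rr σ)
            rw [hjd, h]
          rw [hwvd, hdq]
          exact Finset.mem_erase.2 ⟨Ne.symm hqw, hw⟩
        obtain ⟨v, hv, hv2⟩ := exists_rr hσbad
        have hvq : v = q := by
          by_contra hne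
          have : v ∈ big d := hbd ▸ Finset.mem_erase.2 ⟨hne, hv⟩
          exact hrne (le_antisymm hrrm (hv2 ▸ rr_le this))
        have : q.val.2 = rr σ := by rw [← hvq, hv2]
        rw [this]
        exact lt_of_le_of_ne hrrm hrne

lemma own_eq_of_not_stage_lt {σ d : Finset (RCpt n)} (hσc : Chain σ) (hw : wv σ ∈ σ)
    (hσbad : Bad σ) (hsub : d ⊆ σ) (hdbad : Bad d)
    (hst : ¬ stage (own d) < stage σ) : own d = σ := by
  by_cases h1 : d = σ
  · rw [h1, own_typeII hw]
  by_cases h2 : d = σ.erase (wv σ)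
  · rw [h2, own_erase hσbad hw]
  · exact absurd (stage_lt_stage (key hσc hw hσbad hsub hdbad h1 h2)) hst

lemma stage_own_mono {c d : Finset (RCpt n)} (hc : Chain c) (hbadc : Bad c)
    (hd : d ⊆ c) (hdbad : Bad d) : stage (own d) ≤ stage (own c) := by
  have hσc : Chain (own c) := own_chain hc
  have hw : wv (own c) ∈ own c := own_wv_mem hbadc
  have hσbad : Bad (own c) := own_bad hbadc
  have hsub : d ⊆ own c := hd.trans (subset_own c)
  by_cases hst : stage (own d) < stage (own c)
  · exact le_of_lt hst
  · rw [own_eq_of_not_stage_lt hσc hw hσbad hsub hdbad hst]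

lemma not_bad_subset {c d : Finset (RCpt n)} (h : ¬ Bad c) (hd : d ⊆ c) : ¬ Bad d := by
  rw [not_bad_iff] at h ⊢
  intro v hv
  exact (h v (hd hv)).trans (Finset.inf_mono hd)

lemma exists_lt_wv {σ : Finset (RCpt n)} (hc : Chain σ) (hbad : Bad σ) :
    ∃ u ∈ σ, u < wv σ := by
  have hne : σ.Nonempty := hbad.mono big_subset
  obtain ⟨v₀, hv₀, hv₀2⟩ := exists_jj hne
  refine ⟨v₀, hv₀, lt_of_le_of_ne (small_le_wv hc hv₀ (hv₀2 ▸ rc_le v₀)) ?_⟩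
  intro h
  have h2 : v₀.val.2 = rr σ := by rw [h]; rfl
  apply ne_of_lt (jj_lt_rr hbad)
  rw [← hv₀2, h2]

lemma exists_wv_lt {σ : Finset (RCpt n)} (hbad : Bad σ) :
    ∃ u ∈ σ, wv σ < u := by
  obtain ⟨v, hv⟩ := hbad
  exact ⟨v, big_subset hv, wv_lt_big hv⟩

/-- τ is bad -/
lemma bad_tau {σ : Finset (RCpt n)} (hbad : Bad σ) (hw : wv σ ∈ σ) :
    Bad (σ.erase (wv σ)) := bad_erase hbad hw

lemma own_tau {σ : Finset (RCpt n)} (hbad : Bad σ) (hw : wv σ ∈ σ) :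
    own (σ.erase (wv σ)) = σ := own_erase hbad hw



def keyFn (v : RCpt n) : ℕ := v.val.1.val * (n+1) + v.val.2.val

lemma keyFn_inj {a b : RCpt n} (h : keyFn a = keyFn b) : a = b := by
  have h2 : a.val.2.val < n+1 := a.val.2.isLt
  have h2' : b.val.2.val < n+1 := b.val.2.isLt
  unfold keyFn at h
  have e2 : a.val.2.val = b.val.2.val := by
    have m1 : (a.val.1.val * (n+1) + a.val.2.val) % (n+1) = a.val.2.val := by
      rw [Nat.mul_comm, Nat.mul_add_mod, Nat.mod_eq_of_lt h2]
    have m2 : (b.val.1.val * (n+1) + b.val.2.val) % (n+1) = b.val.2.val := by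
      rw [Nat.mul_comm, Nat.mul_add_mod, Nat.mod_eq_of_lt h2']
    rw [h] at m1
    omega
  have e1 : a.val.1.val = b.val.1.val := by
    have : a.val.1.val * (n+1) = b.val.1.val * (n+1) := by omega
    exact Nat.eq_of_mul_eq_mul_right (by omega) this
  exact Subtype.ext (Prod.ext (Fin.ext e1) (Fin.ext e2))

lemma keyFn_le {a b : RCpt n} (h : a ≤ b) : keyFn a ≤ keyFn b := by
  obtain ⟨h1, h2⟩ := (le_iff a b).1 h
  unfold keyFn
  have := Nat.mul_le_mul_right (n+1) (Fin.val_le_of_le h1)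
  have := Fin.val_le_of_le h2
  omega

lemma keyFn_lt {a b : RCpt n} (h : a < b) : keyFn a < keyFn b :=
  lt_of_le_of_ne (keyFn_le (le_of_lt h)) (fun e => (ne_of_lt h) (keyFn_inj e))

def lrel (a b : RCpt n) : Prop := keyFn a ≤ keyFn b

instance : DecidableRel (lrel (n := n)) := fun a b => Nat.decLe _ _
instance : IsTrans (RCpt n) lrel := ⟨fun _ _ _ h h' => Nat.le_trans h h'⟩
instance : Std.Antisymm (lrel (n := n)) := ⟨fun _ _ h h' => keyFn_inj (Nat.le_antisymm h h')⟩
instance : Std.Total (lrel (n := n)) := ⟨fun a b => Nat.le_total _ _⟩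

noncomputable def slist (c : Finset (RCpt n)) : List (RCpt n) := c.sort lrel

lemma slist_length (c : Finset (RCpt n)) : (slist c).length = c.card := Finset.length_sort _
lemma mem_slist {c : Finset (RCpt n)} {v} : v ∈ slist c ↔ v ∈ c := Finset.mem_sort _
lemma slist_nodup (c : Finset (RCpt n)) : (slist c).Nodup := Finset.sort_nodup _ _
lemma slist_sorted (c : Finset (RCpt n)) : (slist c).Pairwise lrel := Finset.pairwise_sort _ _

noncomputable def enum (c : Finset (RCpt n)) (i : Fin c.card) : RCpt n :=
  (slist c).get (Fin.cast (slist_length c).symm i)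

noncomputable def idx (c : Finset (RCpt n)) (v : RCpt n) (hv : v ∈ c) : Fin c.card :=
  Fin.cast (slist_length c)
    ⟨(slist c).idxOf v, List.idxOf_lt_length_iff.2 (mem_slist.2 hv)⟩

lemma enum_mem (c : Finset (RCpt n)) (i) : enum c i ∈ c :=
  mem_slist.1 (List.get_mem _ _)

lemma enum_idx (c : Finset (RCpt n)) (v hv) : enum c (idx c v hv) = v :=
  List.idxOf_get _

lemma idx_enum (c : Finset (RCpt n)) (i) (h : enum c i ∈ c) : idx c (enum c i) h = i := by
  apply Fin.ext
  exact List.get_idxOf (slist_nodup c) _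

lemma enum_lrel {c : Finset (RCpt n)} {i j : Fin c.card} (hij : i < j) :
    lrel (enum c i) (enum c j) :=
  (slist_sorted c).rel_get_of_lt hij

lemma enum_inj {c : Finset (RCpt n)} {i j : Fin c.card} (h : enum c i = enum c j) : i = j := by
  have := (List.Nodup.get_inj_iff (slist_nodup c)).1 h
  simpa [Fin.ext_iff] using this

/-- enum is strictly monotone w.r.t. the product order, on chains -/
lemma enum_lt {c : Finset (RCpt n)} (hc : Chain c) {i j : Fin c.card} (hij : i < j) :
    enum c i < enum c j := by
  have hne : enum c i ≠ enum c j := fun h => absurd (enum_inj h) (ne_of_lt hij)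
  rcases hc (enum_mem c i) (enum_mem c j) hne with h | h
  · exact lt_of_le_of_ne h hne
  · exact absurd (keyFn_le h) (by
      have := enum_lrel hij
      have hk : keyFn (enum c i) ≠ keyFn (enum c j) := fun e => hne (keyFn_inj e)
      unfold lrel at this
      omega)

lemma enum_le {c : Finset (RCpt n)} (hc : Chain c) {i j : Fin c.card} (hij : i ≤ j) :
    enum c i ≤ enum c j := by
  rcases eq_or_lt_of_le hij with rfl | h
  · exact le_rfl
  · exact le_of_lt (enum_lt hc h)

lemma idx_lt {c : Finset (RCpt n)} (hc : Chain c) {u v : RCpt n} (hu : u ∈ c) (hv : v ∈ c)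
    (huv : u < v) : idx c u hu < idx c v hv := by
  by_contra hle
  push_neg at hle
  rcases eq_or_lt_of_le hle with h | h
  · have : v = u := by
      rw [← enum_idx c v hv, ← enum_idx c u hu, h]
    exact absurd this (ne_of_gt huv)
  · have := enum_lt hc h
    rw [enum_idx, enum_idx] at this
    exact lt_asymm huv this

lemma idx_le {c : Finset (RCpt n)} (hc : Chain c) {u v : RCpt n} (hu : u ∈ c) (hv : v ∈ c)
    (huv : u ≤ v) : idx c u hu ≤ idx c v hv := by
  rcases eq_or_lt_of_le huv with rfl | h
  · simp [idx]
  · exact le_of_lt (idx_lt hc hu hv h)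



lemma bad_of_subset {d c : Finset (RCpt n)} (h : d ⊆ c) (hd : Bad d) : Bad c := by
  obtain ⟨u, hu⟩ := hd
  rw [mem_big_iff] at hu
  exact ⟨u, mem_big_iff.2 ⟨h hu.1, lt_of_le_of_lt (Finset.inf_mono h) hu.2⟩⟩

lemma eq_tau_or_sigma {σ e : Finset (RCpt n)} (hw : wv σ ∈ σ)
    (h1 : σ.erase (wv σ) ⊆ e) (h2 : e ⊆ σ) : e = σ.erase (wv σ) ∨ e = σ := by
  by_cases hwe : wv σ ∈ e
  · right
    apply Finset.Subset.antisymm h2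
    intro a ha
    by_cases haw : a = wv σ
    · exact haw ▸ hwe
    · exact h1 (Finset.mem_erase.2 ⟨haw, ha⟩)
  · left
    apply Finset.Subset.antisymm _ h1
    intro a ha
    exact Finset.mem_erase.2 ⟨fun h => hwe (h ▸ ha), h2 ha⟩

/-! ### Simplicial part -/

open SimplexCategory GrothendieckTopology Opposite SSet

/-- the set of vertices of a simplex of the nerve -/
noncomputable def core {U : SimplexCategoryᵒᵖ} (x : (nerve (RCpt n)).obj U) :
    Finset (RCpt n) := Finset.image x.obj Finset.univ

lemma obj_mem_core {U : SimplexCategoryᵒᵖ} (x : (nerve (RCpt n)).obj U) (i) :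
    x.obj i ∈ core x := Finset.mem_image_of_mem _ (Finset.mem_univ _)

lemma mem_core_iff {U : SimplexCategoryᵒᵖ} (x : (nerve (RCpt n)).obj U) (v) :
    v ∈ core x ↔ ∃ i, x.obj i = v := by
  simp [core]

lemma core_nonempty {U : SimplexCategoryᵒᵖ} (x : (nerve (RCpt n)).obj U) :
    (core x).Nonempty := ⟨x.obj 0, obj_mem_core x 0⟩

lemma x_mono {U : SimplexCategoryᵒᵖ} (x : (nerve (RCpt n)).obj U) {i j} (hij : i ≤ j) :
    x.obj i ≤ x.obj j := leOfHom (x.map (homOfLE hij))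

lemma core_chain {U : SimplexCategoryᵒᵖ} (x : (nerve (RCpt n)).obj U) :
    Chain (core x) := by
  intro a ha b hb hab
  rw [Finset.mem_coe, mem_core_iff] at ha hb
  obtain ⟨i, rfl⟩ := ha
  obtain ⟨j, rfl⟩ := hb
  rcases le_total i j with h | h
  · exact Or.inl (x_mono x h)
  · exact Or.inr (x_mono x h)

lemma core_map {U V : SimplexCategoryᵒᵖ} (f : U ⟶ V) (x : (nerve (RCpt n)).obj U) :
    core ((nerve (RCpt n)).map f x) ⊆ core x := by
  intro a ha
  rw [mem_core_iff] at ha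
  obtain ⟨i, rfl⟩ := ha
  exact obj_mem_core x _

/-- the filtration of the nerve -/
noncomputable def Fb (n : ℕ) (b : ℕ) : Subfunctor (nerve (RCpt n)) where
  obj U := {x | ¬ Bad (core x) ∨ stage (own (core x)) < b}
  map {U V} f := by
    rintro x (hx | hx)
    · exact Or.inl (not_bad_subset hx (core_map f x))
    · by_cases hy : Bad (core ((nerve (RCpt n)).map f x))
      · have hbx : Bad (core x) := by
          by_contra hbx
          exact (not_bad_subset hbx (core_map f x)) hy
        exact Or.inr (lt_of_le_of_lt
          (stage_own_mono (core_chain x) hbx (core_map f x) hy) hx)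
      · exact Or.inl hy

lemma mem_Fb_iff {b : ℕ} {U : SimplexCategoryᵒᵖ} (x : (nerve (RCpt n)).obj U) :
    x ∈ (Fb n b).obj U ↔ (¬ Bad (core x) ∨ stage (own (core x)) < b) := Iff.rfl

abbrev Asub (n : ℕ) : Subfunctor (nerve (RCpt n)) :=
  nerveUnion (RCpt n) (Set.range fun k : Fin (n + 1) =>
    setOf fun x : RCpt n => x.1.1 ≤ k ∧ k ≤ x.1.2)

lemma mem_A_iff {U : SimplexCategoryᵒᵖ} (x : (nerve (RCpt n)).obj U) :
    x ∈ (Asub n).obj U ↔ ¬ Bad (core x) := by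
  constructor
  · rintro ⟨T, ⟨k, rfl⟩, h⟩
    rw [not_bad_iff]
    intro w hw
    rw [mem_core_iff] at hw
    obtain ⟨i, rfl⟩ := hw
    refine le_trans (h i).1 (Finset.le_inf ?_)
    intro a ha
    rw [mem_core_iff] at ha
    obtain ⟨i', rfl⟩ := ha
    exact (h i').2
  · intro h
    refine ⟨_, ⟨jj (core x), rfl⟩, fun i => ?_⟩
    exact ⟨not_bad_iff.1 h _ (obj_mem_core x i), jj_le (obj_mem_core x i)⟩

lemma Asub_le_Fb (b : ℕ) : Asub n ≤ Fb n b := by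
  rw [Subfunctor.le_def]
  intro U x hx
  exact Or.inl ((mem_A_iff x).1 hx)


variable (σ : Finset (RCpt n)) {m : ℕ}

/-- vertex map of the simplex associated to a chain -/
noncomputable def vmap (hm : σ.card = m + 1) (i : Fin (m + 1)) : RCpt n :=
  enum σ (Fin.cast hm.symm i)

lemma vmap_mem (hm : σ.card = m + 1) (i) : vmap σ hm i ∈ σ := enum_mem _ _

lemma vmap_mono (hσ : Chain σ) (hm : σ.card = m + 1) {i j : Fin (m+1)} (hij : i ≤ j) :
    vmap σ hm i ≤ vmap σ hm j :=
  enum_le hσ hij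

lemma vmap_inj (hm : σ.card = m + 1) {i j : Fin (m+1)} (h : vmap σ hm i = vmap σ hm j) :
    i = j := by
  have := enum_inj h
  simpa [Fin.ext_iff] using this

lemma vmap_idx (hm : σ.card = m + 1) {v : RCpt n} (hv : v ∈ σ) :
    vmap σ hm (Fin.cast hm (idx σ v hv)) = v := by
  rw [vmap]
  have : Fin.cast hm.symm (Fin.cast hm (idx σ v hv)) = idx σ v hv := rfl
  rw [this, enum_idx]

/-- the simplex of the nerve associated to a chain -/
noncomputable def sSimp (hσ : Chain σ) (hm : σ.card = m + 1) :
    (nerve (RCpt n)).obj (op (SimplexCategory.mk m)) :=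
  Monotone.functor (f := vmap σ hm) (fun _ _ h => vmap_mono σ hσ hm h)

lemma sSimp_obj (hσ : Chain σ) (hm : σ.card = m + 1) (i) :
    (sSimp σ hσ hm).obj i = vmap σ hm i := rfl

lemma core_sSimp (hσ : Chain σ) (hm : σ.card = m + 1) : core (sSimp σ hσ hm) = σ := by
  apply Finset.Subset.antisymm
  · intro a ha
    rw [mem_core_iff] at ha
    obtain ⟨i, rfl⟩ := ha
    exact vmap_mem σ hm i
  · intro a ha
    rw [mem_core_iff]
    exact ⟨Fin.cast hm (idx σ a ha), vmap_idx σ hm ha⟩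


/-- functor extensionality for nerve simplices -/
lemma cArrows_ext {U : SimplexCategoryᵒᵖ} {x y : (nerve (RCpt n)).obj U}
    (h : ∀ i, x.obj i = y.obj i) : x = y :=
  CategoryTheory.Functor.ext (fun i => h i) (fun _ _ _ => Subsingleton.elim _ _)

/-- the map `Δ[m] ⟶ nerve (RCpt n)` associated to an `m`-simplex -/
@[simps]
def toNerve {m : ℕ} (s : (nerve (RCpt n)).obj (op (SimplexCategory.mk m))) :
    Δ[m] ⟶ nerve (RCpt n) where
  app U := ↾fun α => (nerve (RCpt n)).map ((stdSimplex.objEquiv α).op) s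
  naturality U V f := by
    ext α : 3
    show (nerve (RCpt n)).map ((stdSimplex.objEquiv (Δ[m].map f α)).op) s =
      (nerve (RCpt n)).map f ((nerve (RCpt n)).map ((stdSimplex.objEquiv α).op) s)
    rw [stdSimplex.map_apply, Equiv.apply_symm_apply, op_comp,
      FunctorToTypes.map_comp_apply, Quiver.Hom.op_unop]

/-- vertices of a simplex pushed through `(nerve _).map` -/
lemma nerve_map_obj {U : SimplexCategoryᵒᵖ} {m : ℕ} (g : U.unop ⟶ SimplexCategory.mk m)
    (s : (nerve (RCpt n)).obj (op (SimplexCategory.mk m))) (i) :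
    ((nerve (RCpt n)).map g.op s).obj i = s.obj (g.toOrderHom i) := rfl

section Fac

variable (σ : Finset (RCpt n)) {m : ℕ}

/-- the factorization of a simplex with vertices in `σ` through the simplex of `σ` -/
noncomputable def facHom (hσ : Chain σ) (hm : σ.card = m + 1) {U : SimplexCategoryᵒᵖ}
    (x : (nerve (RCpt n)).obj U) (hsub : core x ⊆ σ) : U.unop ⟶ SimplexCategory.mk m :=
  SimplexCategory.Hom.mk
    ⟨fun i => Fin.cast hm (idx σ (x.obj i) (hsub (obj_mem_core x i))),
     fun i j hij => by
       simp only [Fin.coe_cast, Fin.le_def]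
       exact idx_le hσ _ _ (x_mono x hij)⟩

lemma facHom_apply (hσ : Chain σ) (hm : σ.card = m + 1) {U : SimplexCategoryᵒᵖ}
    (x : (nerve (RCpt n)).obj U) (hsub : core x ⊆ σ) (i) :
    (facHom σ hσ hm x hsub).toOrderHom i
      = Fin.cast hm (idx σ (x.obj i) (hsub (obj_mem_core x i))) := rfl

lemma fac_eq (hσ : Chain σ) (hm : σ.card = m + 1) {U : SimplexCategoryᵒᵖ}
    (x : (nerve (RCpt n)).obj U) (hsub : core x ⊆ σ) :
    (nerve (RCpt n)).map (facHom σ hσ hm x hsub).op (sSimp σ hσ hm) = x := by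
  apply cArrows_ext
  intro i
  rw [nerve_map_obj, sSimp_obj, facHom_apply, vmap_idx]

/-- index of the distinguished vertex -/
noncomputable def tI (hw : wv σ ∈ σ) (hm : σ.card = m + 1) : Fin (m + 1) :=
  Fin.cast hm (idx σ (wv σ) hw)

lemma vmap_tI (hw : wv σ ∈ σ) (hm : σ.card = m + 1) : vmap σ hm (tI σ hw hm) = wv σ :=
  vmap_idx σ hm hw

lemma tI_pos (hσ : Chain σ) (hbad : Bad σ) (hw : wv σ ∈ σ) (hm : σ.card = m + 1) :
    0 < (tI σ hw hm : ℕ) := by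
  obtain ⟨u, hu, hult⟩ := exists_lt_wv hσ hbad
  have := idx_lt hσ hu hw hult
  have h0 : (idx σ u hu : ℕ) < (idx σ (wv σ) hw : ℕ) := this
  show 0 < (idx σ (wv σ) hw : ℕ)
  omega

lemma tI_lt (hσ : Chain σ) (hbad : Bad σ) (hw : wv σ ∈ σ) (hm : σ.card = m + 1) :
    (tI σ hw hm : ℕ) < m := by
  obtain ⟨u, hu, hult⟩ := exists_wv_lt hbad
  have h0 : (idx σ (wv σ) hw : ℕ) < (idx σ u hu : ℕ) := idx_lt hσ hw hu hult
  have h1 : (idx σ u hu : ℕ) < σ.card := (idx σ u hu).isLt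
  show (idx σ (wv σ) hw : ℕ) < m
  omega

end Fac

section Step

variable {X Y : SSet} (p : X ⟶ Y) (hyp : RLP InnerHornInclusions p)
  (v : nerve (RCpt n) ⟶ Y) {b : ℕ} (ℓ : (Fb n b).toFunctor ⟶ X)
  (hℓp : ℓ ≫ p = (Fb n b).ι ≫ v)
  (σ : Finset (RCpt n)) {m : ℕ}

/-- a simplex of `σ` avoiding a vertex other than `wv σ` lies in the filtration -/
lemma core_fac_mem_Fb (hσ : Chain σ) (hw : wv σ ∈ σ) (hbad : Bad σ) (hst : stage σ = b)
    (hm : σ.card = m + 1) {U : SimplexCategoryᵒᵖ} (g : U.unop ⟶ SimplexCategory.mk m)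
    (hgr : ∃ q : Fin (m+1), q ∉ Set.range g.toOrderHom ∧ q ≠ tI σ hw hm) :
    (nerve (RCpt n)).map g.op (sSimp σ hσ hm) ∈ (Fb n b).obj U := by
  set y := (nerve (RCpt n)).map g.op (sSimp σ hσ hm) with hy
  have hsub : core y ⊆ σ := by
    rw [← core_sSimp σ hσ hm]
    exact core_map _ _
  obtain ⟨q, hq1, hq2⟩ := hgr
  have hnc : vmap σ hm q ∉ core y := by
    intro hmem
    rw [mem_core_iff] at hmem
    obtain ⟨i, hi⟩ := hmem
    rw [hy, nerve_map_obj, sSimp_obj] at hi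
    exact hq1 ⟨_, vmap_inj σ hm hi⟩
  by_cases hbady : Bad (core y)
  · refine Or.inr ?_
    rw [← hst]
    refine stage_lt_stage (key hσ hw hbad hsub hbady ?_ ?_)
    · intro h
      rw [h] at hnc
      exact hnc (vmap_mem σ hm q)
    · intro h
      rw [h] at hnc
      refine hnc (Finset.mem_erase.2 ⟨?_, vmap_mem σ hm q⟩)
      intro he
      exact hq2 (vmap_inj σ hm (by rw [he, vmap_tI]))
  · exact Or.inl hbady

lemma horn_exists_q {t : Fin (m+1)} {U : SimplexCategoryᵒᵖ} (β : (Λ[m, t]).obj U) :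
    ∃ q : Fin (m+1), q ∉ Set.range (stdSimplex.objEquiv β.1).toOrderHom ∧ q ≠ t := by
  have h := (SSet.mem_horn_iff _ _).1 β.2
  rw [Set.ne_univ_iff_exists_notMem] at h
  obtain ⟨q, hq⟩ := h
  rw [Set.mem_union, Set.mem_singleton_iff] at hq
  push_neg at hq
  exact ⟨q, hq.1, hq.2⟩

/-- the horn maps into the filtration -/
noncomputable def hornToF (hσ : Chain σ) (hw : wv σ ∈ σ) (hbad : Bad σ) (hst : stage σ = b)
    (hm : σ.card = m + 1) : (Λ[m, tI σ hw hm] : SSet) ⟶ (Fb n b).toFunctor where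
  app U := ↾fun β => ⟨(nerve (RCpt n)).map ((stdSimplex.objEquiv β.1).op) (sSimp σ hσ hm),
    core_fac_mem_Fb σ hσ hw hbad hst hm _ (horn_exists_q β)⟩
  naturality U V f := by
    ext β : 3
    apply Subtype.ext
    show (nerve (RCpt n)).map ((stdSimplex.objEquiv (Δ[m].map f β.1)).op) _ = _
    rw [stdSimplex.map_apply, Equiv.apply_symm_apply, op_comp,
      FunctorToTypes.map_comp_apply, Quiver.Hom.op_unop]
    rfl

lemma hornToF_ι (hσ : Chain σ) (hw : wv σ ∈ σ) (hbad : Bad σ) (hst : stage σ = b)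
    (hm : σ.card = m + 1) :
    hornToF σ hσ hw hbad hst hm ≫ (Fb n b).ι
      = (SSet.horn m (tI σ hw hm)).ι ≫ toNerve (sSimp σ hσ hm) := by
  ext U β
  rfl

include hℓp in
lemma theSq (hσ : Chain σ) (hw : wv σ ∈ σ) (hbad : Bad σ) (hst : stage σ = b)
    (hm : σ.card = m + 1) :
    CommSq (hornToF σ hσ hw hbad hst hm ≫ ℓ) ((SSet.horn m (tI σ hw hm)).ι) p
      (toNerve (sSimp σ hσ hm) ≫ v) :=
  ⟨by rw [Category.assoc, hℓp, ← Category.assoc, hornToF_ι, Category.assoc]⟩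

/-- the filler obtained by lifting against the horn inclusion -/
noncomputable def fillerStruct (hσ : Chain σ) (hw : wv σ ∈ σ) (hbad : Bad σ)
    (hst : stage σ = b) (hm : σ.card = m + 1) :
    (theSq p v ℓ hℓp σ hσ hw hbad hst hm).LiftStruct :=
  ((hyp ((SSet.horn m (tI σ hw hm)).ι)
      ⟨m, tI σ hw hm, tI_pos σ hσ hbad hw hm, tI_lt σ hσ hbad hw hm,
        ⟨Iso.refl _⟩⟩).sq_hasLift
    (theSq p v ℓ hℓp σ hσ hw hbad hst hm)).exists_lift.some

noncomputable def filler (hσ : Chain σ) (hw : wv σ ∈ σ) (hbad : Bad σ)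
    (hst : stage σ = b) (hm : σ.card = m + 1) : Δ[m] ⟶ X :=
  (fillerStruct p hyp v ℓ hℓp σ hσ hw hbad hst hm).l

lemma filler_left (hσ : Chain σ) (hw : wv σ ∈ σ) (hbad : Bad σ)
    (hst : stage σ = b) (hm : σ.card = m + 1) :
    (SSet.horn m (tI σ hw hm)).ι ≫ filler p hyp v ℓ hℓp σ hσ hw hbad hst hm
      = hornToF σ hσ hw hbad hst hm ≫ ℓ :=
  (fillerStruct p hyp v ℓ hℓp σ hσ hw hbad hst hm).fac_left

lemma filler_right (hσ : Chain σ) (hw : wv σ ∈ σ) (hbad : Bad σ)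
    (hst : stage σ = b) (hm : σ.card = m + 1) :
    filler p hyp v ℓ hℓp σ hσ hw hbad hst hm ≫ p = toNerve (sSimp σ hσ hm) ≫ v :=
  (fillerStruct p hyp v ℓ hℓp σ hσ hw hbad hst hm).fac_right

end Step

section Extend

variable {X Y : SSet} (p : X ⟶ Y) (hyp : RLP InnerHornInclusions p)
  (v : nerve (RCpt n) ⟶ Y) {b : ℕ} (ℓ : (Fb n b).toFunctor ⟶ X)
  (hℓp : ℓ ≫ p = (Fb n b).ι ≫ v)

lemma not_mem_Fb {U : SimplexCategoryᵒᵖ} {x : (nerve (RCpt n)).obj U}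
    (hx2 : x ∈ (Fb n (b+1)).obj U) (hx : x ∉ (Fb n b).obj U) :
    Bad (core x) ∧ stage (own (core x)) = b := by
  rcases hx2 with h | h
  · exact absurd (Or.inl h) hx
  · have h1 : ¬ stage (own (core x)) < b := fun hlt => hx (Or.inr hlt)
    have h2 : Bad (core x) := by
      by_contra hb
      exact hx (Or.inl hb)
    exact ⟨h2, by omega⟩

lemma own_card {U : SimplexCategoryᵒᵖ} (x : (nerve (RCpt n)).obj U) :
    (own (core x)).card = ((own (core x)).card - 1) + 1 := by
  have h1 : 0 < (own (core x)).card :=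
    Finset.card_pos.2 ((core_nonempty x).mono (subset_own _))
  omega

lemma std_map_symm {m : ℕ} {U V : SimplexCategoryᵒᵖ} (f : U ⟶ V)
    (g : U.unop ⟶ SimplexCategory.mk m) :
    Δ[m].map f (stdSimplex.objEquiv.symm g)
      = stdSimplex.objEquiv.symm (f.unop ≫ g) := by
  rw [stdSimplex.map_apply, Equiv.apply_symm_apply]

lemma facHom_natural (σ : Finset (RCpt n)) {m : ℕ} (hσ : Chain σ) (hm : σ.card = m + 1)
    {U V : SimplexCategoryᵒᵖ} (f : U ⟶ V) (x : (nerve (RCpt n)).obj U)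
    (hsubx : core x ⊆ σ) (hsuby : core ((nerve (RCpt n)).map f x) ⊆ σ) :
    facHom σ hσ hm ((nerve (RCpt n)).map f x) hsuby = f.unop ≫ facHom σ hσ hm x hsubx :=
  rfl

lemma filler_app_horn (σ : Finset (RCpt n)) {m : ℕ} (hσ : Chain σ) (hw : wv σ ∈ σ)
    (hbad : Bad σ) (hst : stage σ = b) (hm : σ.card = m + 1)
    {U : SimplexCategoryᵒᵖ} (g : U.unop ⟶ SimplexCategory.mk m)
    (hq : ∃ q : Fin (m+1), q ∉ Set.range g.toOrderHom ∧ q ≠ tI σ hw hm) :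
    (filler p hyp v ℓ hℓp σ hσ hw hbad hst hm).app U (stdSimplex.objEquiv.symm g)
      = ℓ.app U ⟨(nerve (RCpt n)).map g.op (sSimp σ hσ hm),
          core_fac_mem_Fb σ hσ hw hbad hst hm g hq⟩ := by
  have hβ : Set.range (stdSimplex.asOrderHom (stdSimplex.objEquiv.symm g))
      ∪ {tI σ hw hm} ≠ Set.univ := by
    obtain ⟨q, hq1, hq2⟩ := hq
    intro h
    have hqm : q ∈ Set.range (stdSimplex.asOrderHom (stdSimplex.objEquiv.symm g))
        ∪ {tI σ hw hm} := h ▸ Set.mem_univ q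
    rcases hqm with h1 | h2
    · exact hq1 h1
    · exact hq2 h2
  have := types_congr_hom (congr_app (filler_left p hyp v ℓ hℓp σ hσ hw hbad hst hm) U)
    ⟨stdSimplex.objEquiv.symm g, hβ⟩
  exact this

/-- value of the filler on a simplex with vertices in `σ` -/
noncomputable def fillVal (σ : Finset (RCpt n)) {m : ℕ} (hσ : Chain σ) (hw : wv σ ∈ σ)
    (hbad : Bad σ) (hst : stage σ = b) (hm : σ.card = m + 1) {U : SimplexCategoryᵒᵖ}
    (x : (nerve (RCpt n)).obj U) (hsub : core x ⊆ σ) : X.obj U :=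
  (filler p hyp v ℓ hℓp σ hσ hw hbad hst hm).app U
    (stdSimplex.objEquiv.symm (facHom σ hσ hm x hsub))

lemma fillVal_natural (σ : Finset (RCpt n)) {m : ℕ} (hσ : Chain σ) (hw : wv σ ∈ σ)
    (hbad : Bad σ) (hst : stage σ = b) (hm : σ.card = m + 1) {U V : SimplexCategoryᵒᵖ}
    (f : U ⟶ V) (x : (nerve (RCpt n)).obj U) (hsub : core x ⊆ σ)
    (hsub' : core ((nerve (RCpt n)).map f x) ⊆ σ) :
    fillVal p hyp v ℓ hℓp σ hσ hw hbad hst hm ((nerve (RCpt n)).map f x) hsub'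
      = X.map f (fillVal p hyp v ℓ hℓp σ hσ hw hbad hst hm x hsub) := by
  rw [fillVal, fillVal,
    ← NatTrans.naturality_apply (filler p hyp v ℓ hℓp σ hσ hw hbad hst hm) f,
    std_map_symm]
  rfl

lemma fillVal_horn (σ : Finset (RCpt n)) {m : ℕ} (hσ : Chain σ) (hw : wv σ ∈ σ)
    (hbad : Bad σ) (hst : stage σ = b) (hm : σ.card = m + 1) {U : SimplexCategoryᵒᵖ}
    (x : (nerve (RCpt n)).obj U) (hsub : core x ⊆ σ)
    (hq : ∃ q : Fin (m+1), q ∉ Set.range (facHom σ hσ hm x hsub).toOrderHom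
      ∧ q ≠ tI σ hw hm) (hxF : x ∈ (Fb n b).obj U) :
    fillVal p hyp v ℓ hℓp σ hσ hw hbad hst hm x hsub = ℓ.app U ⟨x, hxF⟩ := by
  rw [fillVal, filler_app_horn p hyp v ℓ hℓp σ hσ hw hbad hst hm _ hq]
  exact congrArg (ℓ.app U) (Subtype.ext (fac_eq σ hσ hm x hsub))

lemma fillVal_congr {σ σ' : Finset (RCpt n)} (h : σ = σ') {m m' : ℕ}
    (hσ : Chain σ) (hw : wv σ ∈ σ) (hbad : Bad σ) (hst : stage σ = b)
    (hm : σ.card = m + 1)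
    (hσ' : Chain σ') (hw' : wv σ' ∈ σ') (hbad' : Bad σ') (hst' : stage σ' = b)
    (hm' : σ'.card = m' + 1) {U : SimplexCategoryᵒᵖ}
    (x : (nerve (RCpt n)).obj U) (hsub : core x ⊆ σ) (hsub' : core x ⊆ σ') :
    fillVal p hyp v ℓ hℓp σ hσ hw hbad hst hm x hsub
      = fillVal p hyp v ℓ hℓp σ' hσ' hw' hbad' hst' hm' x hsub' := by
  subst h
  obtain rfl : m = m' := by omega
  rfl

lemma fillVal_p (σ : Finset (RCpt n)) {m : ℕ} (hσ : Chain σ) (hw : wv σ ∈ σ)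
    (hbad : Bad σ) (hst : stage σ = b) (hm : σ.card = m + 1) {U : SimplexCategoryᵒᵖ}
    (x : (nerve (RCpt n)).obj U) (hsub : core x ⊆ σ) :
    p.app U (fillVal p hyp v ℓ hℓp σ hσ hw hbad hst hm x hsub) = v.app U x := by
  rw [fillVal]
  refine (types_congr_hom (congr_app (filler_right p hyp v ℓ hℓp σ hσ hw hbad hst hm) U)
    (stdSimplex.objEquiv.symm (facHom σ hσ hm x hsub))).trans ?_
  refine congrArg (v.app U) ?_
  exact fac_eq σ hσ hm x hsub

/-- the value of the extended lift -/
noncomputable def extApp {U : SimplexCategoryᵒᵖ} (x : (nerve (RCpt n)).obj U)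
    (hx2 : x ∈ (Fb n (b+1)).obj U) : X.obj U :=
  letI : Decidable (x ∈ (Fb n b).obj U) := Classical.dec _
  if hx : x ∈ (Fb n b).obj U then ℓ.app U ⟨x, hx⟩
  else
    fillVal p hyp v ℓ hℓp (own (core x))
      (own_chain (core_chain x))
      (own_wv_mem (not_mem_Fb hx2 hx).1)
      (own_bad (not_mem_Fb hx2 hx).1)
      (not_mem_Fb hx2 hx).2
      (own_card x) x (subset_own _)

/-- the extended lift -/
noncomputable def extend : (Fb n (b+1)).toFunctor ⟶ X where
  app U := ↾fun x => extApp p hyp v ℓ hℓp x.1 x.2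
  naturality U V f := by
    ext x : 3
    obtain ⟨x1, hx2⟩ := x
    show extApp p hyp v ℓ hℓp ((nerve (RCpt n)).map f x1) ((Fb n (b+1)).map f hx2)
      = X.map f (extApp p hyp v ℓ hℓp x1 hx2)
    by_cases hx : x1 ∈ (Fb n b).obj U
    · have hy : (nerve (RCpt n)).map f x1 ∈ (Fb n b).obj V := (Fb n b).map f hx
      simp only [extApp]
      rw [dif_pos hx, dif_pos hy]
      exact types_congr_hom (ℓ.naturality f) ⟨x1, hx⟩
    · have hB := (not_mem_Fb hx2 hx).1
      have hst := (not_mem_Fb hx2 hx).2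
      have hch : Chain (own (core x1)) := own_chain (core_chain x1)
      have hwm : wv (own (core x1)) ∈ own (core x1) := own_wv_mem hB
      have hbadσ : Bad (own (core x1)) := own_bad hB
      have hmm : (own (core x1)).card = ((own (core x1)).card - 1) + 1 := own_card x1
      have hsubx : core x1 ⊆ own (core x1) := subset_own _
      have hsuby : core ((nerve (RCpt n)).map f x1) ⊆ own (core x1) :=
        (core_map f x1).trans hsubx
      by_cases hy : (nerve (RCpt n)).map f x1 ∈ (Fb n b).obj V
      · simp only [extApp]
        rw [dif_pos hy, dif_neg hx]
        rw [← fillVal_natural p hyp v ℓ hℓp (own (core x1)) hch hwm hbadσ hst hmm f x1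
          hsubx hsuby]
        have hq : ∃ q : Fin (((own (core x1)).card - 1)+1),
            q ∉ Set.range (facHom (own (core x1)) hch hmm _ hsuby).toOrderHom
              ∧ q ≠ tI (own (core x1)) hwm hmm := by
          by_contra hno
          push_neg at hno
          have hτ : (own (core x1)).erase (wv (own (core x1)))
              ⊆ core ((nerve (RCpt n)).map f x1) := by
            intro u hu
            have huσ : u ∈ own (core x1) := (Finset.mem_erase.1 hu).2
            have hune : u ≠ wv (own (core x1)) := (Finset.mem_erase.1 hu).1
            have hqt : Fin.cast hmm (idx (own (core x1)) u huσ)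
                ≠ tI (own (core x1)) hwm hmm := by
              intro h
              apply hune
              have h2 := congrArg (vmap (own (core x1)) hmm) h
              rw [vmap_idx, vmap_tI] at h2
              exact h2
            have hqr : Fin.cast hmm (idx (own (core x1)) u huσ)
                ∈ Set.range (facHom (own (core x1)) hch hmm _ hsuby).toOrderHom := by
              by_contra hqr
              exact hqt (hno _ hqr)
            obtain ⟨i, hi⟩ := hqr
            rw [mem_core_iff]
            refine ⟨i, ?_⟩
            have h3 := congrArg (vmap (own (core x1)) hmm) hi
            rw [vmap_idx, facHom_apply, vmap_idx] at h3
            exact h3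
          have hbady : Bad (core ((nerve (RCpt n)).map f x1)) :=
            bad_of_subset hτ (bad_tau hbadσ hwm)
          have howny : own (core ((nerve (RCpt n)).map f x1)) = own (core x1) := by
            rcases eq_tau_or_sigma hwm hτ hsuby with h | h
            · rw [h]; exact own_tau hbadσ hwm
            · rw [h]; exact own_typeII hwm
          rcases hy with h | h
          · exact h hbady
          · rw [howny, hst] at h; exact lt_irrefl b h
        rw [fillVal_horn p hyp v ℓ hℓp (own (core x1)) hch hwm hbadσ hst hmm _ hsuby hq hy]
      · simp only [extApp]
        rw [dif_neg hy, dif_neg hx]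
        have hy2 : (nerve (RCpt n)).map f x1 ∈ (Fb n (b+1)).obj V :=
          (Fb n (b+1)).map f hx2
        have hbady := (not_mem_Fb hy2 hy).1
        have howny : own (core ((nerve (RCpt n)).map f x1)) = own (core x1) := by
          apply own_eq_of_not_stage_lt hch hwm hbadσ hsuby hbady
          rw [hst]
          exact fun hlt => hy (Or.inr hlt)
        exact (fillVal_congr p hyp v ℓ hℓp howny
          (own_chain (core_chain _)) (own_wv_mem hbady) (own_bad hbady)
          (by rw [howny]; exact hst) (own_card _)
          hch hwm hbadσ hst hmm _ (subset_own _) hsuby).trans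
          (fillVal_natural p hyp v ℓ hℓp (own (core x1)) hch hwm hbadσ hst hmm f x1
            hsubx hsuby)

lemma Fb_mono (b : ℕ) : Fb n b ≤ Fb n (b+1) := by
  rw [Subfunctor.le_def]
  rintro U x (h | h)
  · exact Or.inl h
  · exact Or.inr (by omega)

lemma extend_restrict :
    Subfunctor.homOfLe (Fb_mono b) ≫ extend p hyp v ℓ hℓp = ℓ := by
  ext U x
  obtain ⟨x1, hx⟩ := x
  show extApp p hyp v ℓ hℓp x1 (Fb_mono b U hx) = ℓ.app U ⟨x1, hx⟩
  simp only [extApp]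
  rw [dif_pos hx]

lemma extend_p : extend p hyp v ℓ hℓp ≫ p = (Fb n (b+1)).ι ≫ v := by
  ext U x
  obtain ⟨x1, hx2⟩ := x
  show p.app U (extApp p hyp v ℓ hℓp x1 hx2) = v.app U x1
  by_cases hx : x1 ∈ (Fb n b).obj U
  · simp only [extApp]
    rw [dif_pos hx]
    exact types_congr_hom (congr_app hℓp U) ⟨x1, hx⟩
  · simp only [extApp]
    rw [dif_neg hx]
    exact fillVal_p p hyp v ℓ hℓp _ _ _ _ _ _ x1 (subset_own _)

end Extend

section Induction

variable {X Y : SSet} (p : X ⟶ Y) (hyp : RLP InnerHornInclusions p)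
  (u : (Asub n).toFunctor ⟶ X) (v : nerve (RCpt n) ⟶ Y)
  (hu : u ≫ p = (Asub n).ι ≫ v)

include hyp hu in
lemma exists_lift : ∀ b : ℕ, ∃ ℓ : (Fb n b).toFunctor ⟶ X,
    Subfunctor.homOfLe (Asub_le_Fb b) ≫ ℓ = u ∧ ℓ ≫ p = (Fb n b).ι ≫ v := by
  intro b
  induction b with
  | zero =>
    have hmem : ∀ (U : SimplexCategoryᵒᵖ) (x : (nerve (RCpt n)).obj U),
        x ∈ (Fb n 0).obj U → x ∈ (Asub n).obj U := by
      rintro U x (h | h)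
      · exact (mem_A_iff x).2 h
      · exact absurd h (Nat.not_lt_zero _)
    refine ⟨{ app := fun U => ↾fun x => u.app U ⟨x.1, hmem U x.1 x.2⟩,
              naturality := fun U V f => by
                ext x : 3
                exact types_congr_hom (u.naturality f) ⟨x.1, hmem U x.1 x.2⟩ }, ?_, ?_⟩
    · ext U x
      rfl
    · ext U x
      exact types_congr_hom (congr_app hu U) ⟨x.1, hmem U x.1 x.2⟩
  | succ b ih =>
    obtain ⟨ℓ, h1, h2⟩ := ih
    refine ⟨extend p hyp v ℓ h2, ?_, extend_p p hyp v ℓ h2⟩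
    ext U x
    obtain ⟨x1, hx⟩ := x
    have hxb : x1 ∈ (Fb n b).obj U := Asub_le_Fb b U hx
    show extApp p hyp v ℓ h2 x1 (Asub_le_Fb (b+1) U hx) = u.app U ⟨x1, hx⟩
    simp only [extApp]
    rw [dif_pos hxb]
    exact types_congr_hom (congr_app h1 U) ⟨x1, hx⟩

/-- bound for the filtration -/
def Bmax (n : ℕ) : ℕ :=
  Fintype.card (RCpt n) * (Fintype.card (RCpt n) * n + 1) + Fintype.card (RCpt n) * n + 1

lemma stage_lt_Bmax (c : Finset (RCpt n)) : stage c < Bmax n := by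
  have e1 : c.card * (Fintype.card (RCpt n) * n + 1)
      ≤ Fintype.card (RCpt n) * (Fintype.card (RCpt n) * n + 1) :=
    Nat.mul_le_mul_right _ c.card_le_univ
  have e2 : c.card * n ≤ Fintype.card (RCpt n) * n :=
    Nat.mul_le_mul_right _ c.card_le_univ
  rw [stage, Bmax]
  omega

lemma mem_Fb_Bmax {U : SimplexCategoryᵒᵖ} (x : (nerve (RCpt n)).obj U) :
    x ∈ (Fb n (Bmax n)).obj U := by
  by_cases h : Bad (core x)
  · exact Or.inr (stage_lt_Bmax _)
  · exact Or.inl h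

include hyp hu in
lemma total_lift : ∃ L : nerve (RCpt n) ⟶ X, (Asub n).ι ≫ L = u ∧ L ≫ p = v := by
  obtain ⟨ℓ, h1, h2⟩ := exists_lift p hyp u v hu (Bmax n)
  refine ⟨{ app := fun U => ↾fun x => ℓ.app U ⟨x, mem_Fb_Bmax x⟩,
            naturality := fun U V f => by
              ext x : 3
              exact types_congr_hom (ℓ.naturality f) ⟨x, mem_Fb_Bmax x⟩ }, ?_, ?_⟩
  · ext U x
    obtain ⟨x1, hx⟩ := x
    show ℓ.app U ⟨x1, mem_Fb_Bmax x1⟩ = u.app U ⟨x1, hx⟩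
    rw [← h1]
    rfl
  · ext U x
    show p.app U (ℓ.app U ⟨x, mem_Fb_Bmax x⟩) = v.app U x
    exact types_congr_hom (congr_app h2 U) ⟨x, mem_Fb_Bmax x⟩

end Induction

end Stmt16Aux

/-- The inclusion `□^n ⊆ N(RCpt^n)` is inner anodyne, where
`□^n = ⋃_{k=0}^n N({(i,j) : i ≤ k ≤ j})`. -/
theorem stmt16 (n : ℕ) :
    InnerAnodyne (nerveUnion (RCpt n)
      (Set.range fun k : Fin (n + 1) =>
        setOf fun x : RCpt n => x.1.1 ≤ k ∧ k ≤ x.1.2)).ι := by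
  intro X Y p hyp
  constructor
  intro u v sq
  obtain ⟨L, hL1, hL2⟩ := Stmt16Aux.total_lift p hyp u v sq.w
  exact CommSq.HasLift.mk' ⟨L, hL1, hL2⟩
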